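/- arXiv:1502.02225 — 2 statements merged into one kernel-verified Lean document; each statement's English description precedes it below -/
import Mathlib

section
/- Fix a ∈ (0, 1/2], let λ₂ = 1 − π·a(1−a)/sin(πa) − π·a²(1−a)²/(2·sin(πa)) and β = a(1−a). For λ > 0 define, for r ∈ (0,1), G_λ(r) = 1/2 − log(e^{R(a)/2}/r') + [r²·sin(πa) − 2(1−a)·(E_a(r) − r'²·K_a(r))] / (2λ·r²·r'²·sin(πa)), where r' = √(1−r²). If λ₂ < λ < β, then there exists r₀ ∈ (0,1) such that G_λ is strictly decreasing on (0, r₀) and strictly increasing on (r₀, 1). -/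
open Real Set Filter Topology

/-- The digamma function `ψ(x) = Γ'(x)/Γ(x)`. -/
noncomputable def digamma (x : ℝ) : ℝ := deriv Real.Gamma x / Real.Gamma x

/-- The Ramanujan constant function `R(x) = -2γ - ψ(x) - ψ(1-x)`. -/
noncomputable def ramanujanR (x : ℝ) : ℝ :=
  -2 * Real.eulerMascheroniConstant - digamma x - digamma (1 - x)

/-- The Riemann zeta function as a real series `ζ(s) = Σ_{n=1}^∞ n^{-s}`. -/
noncomputable def zetaR (s : ℝ) : ℝ := ∑' n : ℕ, 1 / ((n : ℝ) + 1) ^ s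

/-- The generalized elliptic integral of the first kind
`K_a(r) = (π/2) Σ_{n=0}^∞ ((a)_n (1-a)_n / (n!)^2) r^(2n)`. -/
noncomputable def Ka (a r : ℝ) : ℝ :=
  Real.pi / 2 * ∑' n : ℕ,
    (Polynomial.eval a (ascPochhammer ℝ n) * Polynomial.eval (1 - a) (ascPochhammer ℝ n)
      / (Nat.factorial n : ℝ) ^ 2) * r ^ (2 * n)

/-- The generalized elliptic integral of the second kind
`E_a(r) = (π/2) Σ_{n=0}^∞ ((a-1)_n (1-a)_n / (n!)^2) r^(2n)`. -/
noncomputable def Ea (a r : ℝ) : ℝ :=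
  Real.pi / 2 * ∑' n : ℕ,
    (Polynomial.eval (a - 1) (ascPochhammer ℝ n) * Polynomial.eval (1 - a) (ascPochhammer ℝ n)
      / (Nat.factorial n : ℝ) ^ 2) * r ^ (2 * n)

/-- coefficient of K series -/
noncomputable def cc (a : ℝ) (n : ℕ) : ℝ :=
  Polynomial.eval a (ascPochhammer ℝ n) * Polynomial.eval (1 - a) (ascPochhammer ℝ n)
    / (Nat.factorial n : ℝ) ^ 2

/-- coefficient of E series -/
noncomputable def ec (a : ℝ) (n : ℕ) : ℝ :=
  Polynomial.eval (a - 1) (ascPochhammer ℝ n) * Polynomial.eval (1 - a) (ascPochhammer ℝ n)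
    / (Nat.factorial n : ℝ) ^ 2

lemma cc_zero (a : ℝ) : cc a 0 = 1 := by simp [cc]

lemma ec_zero (a : ℝ) : ec a 0 = 1 := by simp [ec]

lemma poch_eval_succ (x : ℝ) (n : ℕ) :
    Polynomial.eval x (ascPochhammer ℝ (n+1))
      = Polynomial.eval x (ascPochhammer ℝ n) * (x + n) := by
  rw [ascPochhammer_succ_right]
  simp

lemma poch_eval_succ_left (x : ℝ) (n : ℕ) :
    Polynomial.eval x (ascPochhammer ℝ (n+1))
      = x * Polynomial.eval (x + 1) (ascPochhammer ℝ n) := by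
  rw [ascPochhammer_succ_left]
  simp [Polynomial.eval_comp]

lemma cc_succ (a : ℝ) (n : ℕ) :
    cc a (n+1) = cc a n * ((a + n) * (1 - a + n) / ((n : ℝ) + 1)^2) := by
  have h1 : (Nat.factorial (n+1) : ℝ) = ((n:ℝ)+1) * (Nat.factorial n : ℝ) := by
    push_cast [Nat.factorial_succ]; ring
  have h2 : (Nat.factorial n : ℝ) ≠ 0 := Nat.cast_ne_zero.mpr (Nat.factorial_ne_zero n)
  have h3 : ((n:ℝ)+1) ≠ 0 := by positivity
  rw [cc, cc, poch_eval_succ, poch_eval_succ, h1]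
  field_simp

lemma ec_sub_cc_succ (a : ℝ) (n : ℕ) :
    ec a (n+1) - cc a (n+1) = -(cc a n * (((n:ℝ) + 1 - a) / ((n:ℝ) + 1))) := by
  have h1 : (Nat.factorial (n+1) : ℝ) = ((n:ℝ)+1) * (Nat.factorial n : ℝ) := by
    push_cast [Nat.factorial_succ]; ring
  have h2 : (Nat.factorial n : ℝ) ≠ 0 := Nat.cast_ne_zero.mpr (Nat.factorial_ne_zero n)
  have h3 : ((n:ℝ)+1) ≠ 0 := by positivity
  have hA : Polynomial.eval (a-1) (ascPochhammer ℝ (n+1))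
      = (a - 1) * Polynomial.eval a (ascPochhammer ℝ n) := by
    rw [poch_eval_succ_left]; ring_nf
  rw [ec, cc, hA, poch_eval_succ (1-a) n, poch_eval_succ a n, cc, h1]
  field_simp
  ring

lemma poch_eval_pos {x : ℝ} (hx : 0 < x) (n : ℕ) :
    0 < Polynomial.eval x (ascPochhammer ℝ n) := by
  induction n with
  | zero => simp
  | succ n ih => rw [poch_eval_succ]; positivity

section apos
variable {a : ℝ} (ha : 0 < a) (ha1 : a < 1)
include ha ha1

lemma cc_pos (n : ℕ) : 0 < cc a n := by
  have h1 := poch_eval_pos (x := a) ha n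
  have _ := ha1
  have h2 := poch_eval_pos (x := 1 - a) (by linarith) n
  have h3 : (0:ℝ) < (Nat.factorial n : ℝ) := Nat.cast_pos.mpr (Nat.factorial_pos n)
  rw [cc]
  exact div_pos (mul_pos h1 h2) (pow_pos h3 2)

lemma cc_le_one (n : ℕ) : cc a n ≤ 1 := by
  induction n with
  | zero => rw [cc_zero]
  | succ n ih =>
    rw [cc_succ]
    have h1 : (a + n) * (1 - a + n) ≤ ((n:ℝ)+1)^2 := by nlinarith [Nat.cast_nonneg (α := ℝ) n]
    have h2 : (0:ℝ) < ((n:ℝ)+1)^2 := by positivity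
    have h3 : (a + n) * (1 - a + n) / ((n:ℝ)+1)^2 ≤ 1 := by
      rw [div_le_one h2]; exact h1
    have h4 : 0 ≤ (a + n) * (1 - a + n) / ((n:ℝ)+1)^2 := by
      apply div_nonneg _ (by positivity)
      nlinarith [Nat.cast_nonneg (α := ℝ) n]
    nlinarith [cc_pos ha ha1 n]

lemma abs_ec_le (n : ℕ) : |ec a n| ≤ 2 := by
  cases n with
  | zero => rw [ec_zero]; norm_num
  | succ n =>
    have h := ec_sub_cc_succ a n
    have hc1 := cc_pos ha ha1 (n+1)
    have hc1' := cc_le_one ha ha1 (n+1)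
    have hc0 := cc_pos ha ha1 n
    have hc0' := cc_le_one ha ha1 n
    have hq : 0 ≤ ((n:ℝ) + 1 - a) / ((n:ℝ) + 1) := by
      apply div_nonneg <;> [nlinarith [Nat.cast_nonneg (α := ℝ) n]; positivity]
    have hq1 : ((n:ℝ) + 1 - a) / ((n:ℝ) + 1) ≤ 1 := by
      rw [div_le_one (by positivity)]; linarith
    have : ec a (n+1) = cc a (n+1) - cc a n * (((n:ℝ) + 1 - a) / ((n:ℝ) + 1)) := by linarith
    rw [this, abs_le]
    constructor <;> nlinarith
end apos

lemma aux_summable_geom {ρ : ℝ} (hρ0 : 0 < ρ) (hρ : ρ < 1) (C : ℝ) :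
    Summable (fun n : ℕ => C * ((n:ℝ)+1)^2 * ρ^n / ρ) := by
  apply Summable.div_const
  have h : Summable (fun n : ℕ => ((n:ℝ)+1)^2 * ρ^n) := by
    have h1 := summable_pow_mul_geometric_of_norm_lt_one (R := ℝ) 2 (r := ρ)
      (by rw [Real.norm_eq_abs, abs_of_pos hρ0]; exact hρ)
    have h2 := summable_pow_mul_geometric_of_norm_lt_one (R := ℝ) 1 (r := ρ)
      (by rw [Real.norm_eq_abs, abs_of_pos hρ0]; exact hρ)
    have h3 := summable_geometric_of_lt_one hρ0.le hρ
    have := (h1.add ((h2.mul_left 2).add h3))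
    apply this.congr
    intro n; simp; ring
  exact (h.mul_left C).congr (fun n => by ring)

lemma aux_summable {g : ℕ → ℝ} {C : ℝ} (hg : ∀ n, |g n| ≤ C * ((n:ℝ)+1))
    {x : ℝ} (hx : |x| < 1) : Summable (fun n : ℕ => g n * x ^ n) := by
  have hC : 0 ≤ C := by
    have := hg 0; have := abs_nonneg (g 0); simp at this ⊢; nlinarith [hg 0, abs_nonneg (g 0)]
  apply Summable.of_norm
  have h : Summable (fun n : ℕ => C * (((n:ℝ)+1) * |x|^n)) := by
    apply Summable.mul_left
    have h1 := summable_pow_mul_geometric_of_norm_lt_one (R := ℝ) 1 (r := |x|)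
      (by rwa [Real.norm_eq_abs, abs_abs])
    have h2 := summable_geometric_of_lt_one (abs_nonneg x) hx
    have := h1.add h2
    apply this.congr; intro n; simp; ring
  apply Summable.of_nonneg_of_le (fun n => norm_nonneg _) _ h
  intro n
  rw [Real.norm_eq_abs, abs_mul, abs_pow]
  calc |g n| * |x|^n ≤ (C * ((n:ℝ)+1)) * |x|^n := by
        apply mul_le_mul_of_nonneg_right (hg n) (by positivity)
    _ = C * (((n:ℝ)+1) * |x|^n) := by ring

/-- derivative of a power series with linearly bounded coefficients -/
lemma aux_hasDerivAt {g : ℕ → ℝ} {C : ℝ} (hg : ∀ n, |g n| ≤ C * ((n:ℝ)+1))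
    {x : ℝ} (hx : |x| < 1) :
    HasDerivAt (fun y => ∑' n : ℕ, g n * y ^ n)
      (∑' n : ℕ, (g (n+1) * ((n:ℝ)+1)) * x ^ n) x := by
  have hC : 0 ≤ C := by nlinarith [hg 0, abs_nonneg (g 0)]
  set ρ : ℝ := (1 + |x|) / 2 with hρdef
  have hρ0 : 0 < ρ := by positivity
  have hρ1 : ρ < 1 := by rw [hρdef]; linarith
  have hxρ : |x| < ρ := by rw [hρdef]; linarith
  have hbound : ∀ n : ℕ, ∀ y ∈ Ioo (-ρ) ρ,
      ‖g n * ((n:ℝ) * y ^ (n-1))‖ ≤ C * ((n:ℝ)+1)^2 * ρ^n / ρ := by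
    intro n y hy
    have hyρ : |y| ≤ ρ := by rw [abs_le]; exact ⟨hy.1.le, hy.2.le⟩
    rw [Real.norm_eq_abs, abs_mul, abs_mul, abs_pow, Nat.abs_cast]
    calc |g n| * ((n:ℝ) * |y| ^ (n-1))
        ≤ (C * ((n:ℝ)+1)) * (((n:ℝ)+1) * ρ ^ (n-1)) := by
          apply mul_le_mul (hg n) _ (by positivity) (by positivity)
          apply mul_le_mul (by linarith) (pow_le_pow_left₀ (abs_nonneg y) hyρ _) (by positivity)
            (by linarith)
      _ ≤ C * ((n:ℝ)+1)^2 * ρ^n / ρ := by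
          rw [div_eq_mul_inv]
          have h1 : ρ ^ (n-1) ≤ ρ ^ n * ρ⁻¹ := by
            cases n with
            | zero => simp only [Nat.zero_sub, pow_zero]; rw [le_mul_inv_iff₀ hρ0]; nlinarith
            | succ m => simp [pow_succ]; rw [mul_assoc, mul_inv_cancel₀ (ne_of_gt hρ0), mul_one]
          calc (C * ((n:ℝ)+1)) * (((n:ℝ)+1) * ρ ^ (n-1))
              = C * ((n:ℝ)+1)^2 * ρ^(n-1) := by ring
            _ ≤ C * ((n:ℝ)+1)^2 * (ρ^n * ρ⁻¹) := by
                apply mul_le_mul_of_nonneg_left h1 (by positivity)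
            _ = C * ((n:ℝ)+1)^2 * ρ^n * ρ⁻¹ := by ring
  have hxmem : x ∈ Ioo (-ρ) ρ := by
    constructor <;> [linarith [neg_abs_le x]; linarith [le_abs_self x]]
  have key : HasDerivAt (fun y => ∑' n : ℕ, g n * y ^ n)
      (∑' n : ℕ, g n * ((n:ℝ) * x ^ (n-1))) x := by
    apply hasDerivAt_tsum_of_isPreconnected
      (aux_summable_geom hρ0 hρ1 C) (isOpen_Ioo (a := -ρ) (b := ρ))
      (convex_Ioo _ _).isPreconnected
      (g' := fun n y => g n * ((n:ℝ) * y ^ (n-1)))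
      (fun n y _ => (hasDerivAt_pow n y).const_mul (g n))
      _ (by constructor <;> [linarith; linarith] : (0:ℝ) ∈ Ioo (-ρ) ρ)
      (aux_summable hg (by norm_num))
      hxmem
    · intro n y hy
      exact hbound n y hy
  convert key using 1
  have hsum : Summable (fun n : ℕ => g n * ((n:ℝ) * x ^ (n-1))) := by
    apply Summable.of_norm
    exact Summable.of_nonneg_of_le (fun n => norm_nonneg _)
      (fun n => hbound n x hxmem) (aux_summable_geom hρ0 hρ1 C)
  rw [Summable.tsum_eq_zero_add hsum]
  simp only [Nat.cast_zero, zero_mul, mul_zero, zero_add, Nat.add_sub_cancel]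
  apply tsum_congr
  intro n
  push_cast
  ring


noncomputable def pco (a : ℝ) (n : ℕ) : ℝ := cc a n / ((n:ℝ)+1)
noncomputable def rco (a : ℝ) (n : ℕ) : ℝ := ((n:ℝ)+1) * cc a (n+1) / ((n:ℝ)+2)
noncomputable def qco (a : ℝ) (n : ℕ) : ℝ :=
  (2+a*(1-a)) * cc a n / (((n:ℝ)+1)*((n:ℝ)+2))
noncomputable def eco (a : ℝ) (n : ℕ) : ℝ :=
  (2+a*(1-a)) * ((n:ℝ)+1) * cc a (n+1) / (((n:ℝ)+2)*((n:ℝ)+3))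

noncomputable def Phi (a x : ℝ) : ℝ := ∑' n : ℕ, pco a n * x^n
noncomputable def Phi' (a x : ℝ) : ℝ := ∑' n : ℕ, rco a n * x^n
noncomputable def qq (a x : ℝ) : ℝ := ∑' n : ℕ, qco a n * x^n
noncomputable def psi (a x : ℝ) : ℝ := ∑' n : ℕ, eco a n * x^n

section main
variable {a : ℝ} (ha : 0 < a) (ha1 : a < 1)
include ha ha1

lemma bb_lt_one : a * (1-a) < 1 := by nlinarith
lemma bb_pos : 0 < a * (1-a) := by nlinarith

lemma pco_bound : ∀ n : ℕ, |pco a n| ≤ 3 * ((n:ℝ)+1) := by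
  intro n
  have h1 := cc_pos ha ha1 n
  have h2 := cc_le_one ha ha1 n
  have h3 : (0:ℝ) < (n:ℝ)+1 := by positivity
  rw [pco, abs_div, abs_of_pos h1, abs_of_pos h3, div_le_iff₀ h3]
  nlinarith

lemma rco_bound : ∀ n : ℕ, |rco a n| ≤ 3 * ((n:ℝ)+1) := by
  intro n
  have h1 := cc_pos ha ha1 (n+1)
  have h2 := cc_le_one ha ha1 (n+1)
  have h3 : (0:ℝ) < (n:ℝ)+1 := by positivity
  have h4 : (0:ℝ) < (n:ℝ)+2 := by positivity
  rw [rco, abs_div, abs_of_pos (by positivity), abs_of_pos h4, div_le_iff₀ h4]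
  nlinarith

lemma qco_bound : ∀ n : ℕ, |qco a n| ≤ 3 * ((n:ℝ)+1) := by
  intro n
  have h1 := cc_pos ha ha1 n
  have h2 := cc_le_one ha ha1 n
  have hb := bb_lt_one ha ha1
  have hb0 := bb_pos ha ha1
  have h3 : (0:ℝ) < (n:ℝ)+1 := by positivity
  have h4 : (0:ℝ) < (n:ℝ)+2 := by positivity
  rw [qco, abs_div, abs_of_pos (by positivity), abs_of_pos (by positivity),
    div_le_iff₀ (by positivity)]
  have h5 : (2 + a*(1-a)) * cc a n ≤ 3 := by nlinarith
  have h6 : (0:ℝ) ≤ (n:ℝ) := Nat.cast_nonneg n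
  nlinarith [mul_nonneg h6 h6, mul_nonneg (mul_nonneg h6 h6) h6]

lemma eco_bound : ∀ n : ℕ, |eco a n| ≤ 3 * ((n:ℝ)+1) := by
  intro n
  have h1 := cc_pos ha ha1 (n+1)
  have h2 := cc_le_one ha ha1 (n+1)
  have hb := bb_lt_one ha ha1
  have hb0 := bb_pos ha ha1
  have h3 : (0:ℝ) < (n:ℝ)+1 := by positivity
  have h4 : (0:ℝ) < ((n:ℝ)+2)*((n:ℝ)+3) := by positivity
  rw [eco, abs_div, abs_of_pos (by positivity), abs_of_pos h4, div_le_iff₀ h4]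
  have h5 : (2 + a*(1-a)) * cc a (n+1) ≤ 3 := by nlinarith
  have h6 : (0:ℝ) ≤ (n:ℝ) := Nat.cast_nonneg n
  have h7 : (2 + a*(1-a)) * ((n:ℝ)+1) * cc a (n+1) ≤ 3 * ((n:ℝ)+1) := by nlinarith
  nlinarith [mul_nonneg h6 h6, mul_nonneg (mul_nonneg h6 h6) h6, mul_pos h3 h3]

lemma Phi_hasDerivAt {x : ℝ} (hx : |x| < 1) : HasDerivAt (Phi a) (Phi' a x) x := by
  have h := aux_hasDerivAt (pco_bound ha ha1) hx
  have he : (∑' n : ℕ, (pco a (n+1) * ((n:ℝ)+1)) * x ^ n) = Phi' a x := by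
    apply tsum_congr
    intro n
    have : pco a (n+1) * ((n:ℝ)+1) = rco a n := by
      rw [pco, rco]
      push_cast
      have : ((n:ℝ)+1+1) ≠ 0 := by positivity
      field_simp
      ring
    rw [this]
  rw [← he]
  exact h

lemma qq_hasDerivAt {x : ℝ} (hx : |x| < 1) : HasDerivAt (qq a) (psi a x) x := by
  have h := aux_hasDerivAt (qco_bound ha ha1) hx
  have he : (∑' n : ℕ, (qco a (n+1) * ((n:ℝ)+1)) * x ^ n) = psi a x := by
    apply tsum_congr
    intro n
    have : qco a (n+1) * ((n:ℝ)+1) = eco a n := by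
      rw [qco, eco]
      push_cast
      have h1 : ((n:ℝ)+1+1) ≠ 0 := by positivity
      have h2 : ((n:ℝ)+1+2) ≠ 0 := by positivity
      field_simp
      ring
    rw [this]
  rw [← he]
  exact h

lemma key_q_identity {x : ℝ} (hx : |x| < 1) :
    qq a x = (1-x) * Phi' a x + Phi a x := by
  have hsum_q := aux_summable (qco_bound ha ha1) hx
  have hsum_p := aux_summable (pco_bound ha ha1) hx
  have hsum_r := aux_summable (rco_bound ha ha1) hx
  -- x * Phi' = ∑ sco n x^n  where sco n = cc a n * n/(n+1)
  have hs_bound : ∀ n : ℕ, |cc a n * (n:ℝ)/((n:ℝ)+1)| ≤ 3 * ((n:ℝ)+1) := by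
    intro n
    have h1 := cc_pos ha ha1 n
    have h2 := cc_le_one ha ha1 n
    have h3 : (0:ℝ) < (n:ℝ)+1 := by positivity
    have h5 : (0:ℝ) ≤ (n:ℝ) := Nat.cast_nonneg n
    rw [abs_div, abs_of_nonneg (by positivity), abs_of_pos h3, div_le_iff₀ h3]
    nlinarith
  have hsum_s := aux_summable hs_bound hx
  have hshift : (∑' n : ℕ, (cc a n * (n:ℝ)/((n:ℝ)+1)) * x^n) = x * Phi' a x := by
    rw [Summable.tsum_eq_zero_add hsum_s]
    simp only [Nat.cast_zero, mul_zero, zero_div, zero_mul, zero_add, pow_succ]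
    rw [Phi', ← tsum_mul_left]
    apply tsum_congr
    intro n
    rw [rco]
    push_cast
    ring
  -- coefficientwise: qco n + sco n = pco n + rco n
  have hco : ∀ n : ℕ, qco a n + cc a n * (n:ℝ)/((n:ℝ)+1) = pco a n + rco a n := by
    intro n
    rw [qco, pco, rco, cc_succ]
    have h1 : ((n:ℝ)+1) ≠ 0 := by positivity
    have h2 : ((n:ℝ)+2) ≠ 0 := by positivity
    field_simp
    ring
  have h1 : qq a x + x * Phi' a x = Phi a x + Phi' a x := by
    rw [← hshift, qq, Phi, Phi', ← Summable.tsum_add hsum_q hsum_s, ← Summable.tsum_add hsum_p hsum_r]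
    apply tsum_congr
    intro n
    rw [← add_mul, ← add_mul, hco]
  linarith [h1]




lemma qco_partial_sum (N : ℕ) :
    ∑ n ∈ Finset.range N, qco a n
      = (N:ℝ) * cc a N * ((N:ℝ) + 1 + a*(1-a)) / ((a*(1-a)) * ((N:ℝ)+1)) := by
  have hb0 : 0 < a*(1-a) := by nlinarith
  induction N with
  | zero => simp
  | succ N ih =>
    rw [Finset.sum_range_succ, ih, qco, cc_succ]
    have h1 : ((N:ℝ)+1) ≠ 0 := by positivity
    have h2 : ((N:ℝ)+2) ≠ 0 := by positivity
    have h3 : (a*(1-a)) ≠ 0 := ne_of_gt hb0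
    have h4 : (1:ℝ) - a ≠ 0 := ne_of_gt (by linarith)
    have h5 : a ≠ 0 := ne_of_gt ha
    push_cast
    field_simp
    ring

lemma eco_partial_sum (N : ℕ) :
    ∑ n ∈ Finset.range N, eco a n
      = (N:ℝ) * ((N:ℝ)+1) * cc a (N+1) / ((N:ℝ)+2) := by
  induction N with
  | zero => simp
  | succ N ih =>
    rw [Finset.sum_range_succ, ih, eco, cc_succ a (N+1)]
    have h1 : ((N:ℝ)+2) ≠ 0 := by positivity
    have h2 : ((N:ℝ)+3) ≠ 0 := by positivity
    push_cast
    field_simp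
    ring

lemma cc_prod_formula (N : ℕ) :
    cc a N = (a / ((N:ℝ) + a)) * ∏ j ∈ Finset.range N, (1 - a^2/((j:ℝ)+1)^2) := by
  induction N with
  | zero => simp [cc_zero]; rw [div_self (ne_of_gt ha)]
  | succ N ih =>
    rw [Finset.prod_range_succ, cc_succ, ih]
    have h1 : ((N:ℝ)+1) ≠ 0 := by positivity
    have h2 : ((N:ℝ)+a) ≠ 0 := by positivity
    have h3 : ((N:ℝ)+1+a) ≠ 0 := by positivity
    push_cast
    field_simp
    ring

lemma Ncc_lim : Tendsto (fun N : ℕ => (N:ℝ) * cc a N) atTop (𝓝 (Real.sin (π * a) / π)) := by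
  have h1 : Tendsto (fun N : ℕ => π * a * ∏ j ∈ Finset.range N, (1 - a^2/((j:ℝ)+1)^2))
      atTop (𝓝 (Real.sin (π * a))) := Real.tendsto_euler_sin_prod a
  have hπ : (π:ℝ) ≠ 0 := ne_of_gt Real.pi_pos
  have h2 : Tendsto (fun N : ℕ => a * ∏ j ∈ Finset.range N, (1 - a^2/((j:ℝ)+1)^2))
      atTop (𝓝 (Real.sin (π * a) / π)) := by
    have := h1.div_const π
    apply this.congr
    intro N
    field_simp
  have h3 : Tendsto (fun N : ℕ => (N:ℝ) / ((N:ℝ) + a)) atTop (𝓝 1) := by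
    have hd : Tendsto (fun N : ℕ => a / ((N:ℝ) + a)) atTop (𝓝 0) := by
      apply Tendsto.div_atTop tendsto_const_nhds
      exact tendsto_atTop_add_const_right atTop a tendsto_natCast_atTop_atTop
    have : Tendsto (fun N : ℕ => 1 - a / ((N:ℝ) + a)) atTop (𝓝 (1 - 0)) :=
      tendsto_const_nhds.sub hd
    rw [sub_zero] at this
    apply this.congr'
    filter_upwards [eventually_gt_atTop 0] with N hN
    have h4 : ((N:ℝ) + a) ≠ 0 := by
      have : (1:ℝ) ≤ (N:ℝ) := Nat.one_le_cast.mpr hN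
      positivity
    field_simp
    ring
  have h4 : Tendsto (fun N : ℕ => ((N:ℝ) / ((N:ℝ) + a)) *
      (a * ∏ j ∈ Finset.range N, (1 - a^2/((j:ℝ)+1)^2))) atTop
      (𝓝 (1 * (Real.sin (π * a) / π))) := h3.mul h2
  rw [one_mul] at h4
  apply h4.congr
  intro N
  rw [cc_prod_formula ha ha1]
  ring

lemma ratio_lim (c d : ℝ) (hd : 0 ≤ d) : Tendsto (fun N : ℕ => ((N:ℝ) + c) / ((N:ℝ) + d)) atTop (𝓝 1) := by
  have hd2 : Tendsto (fun N : ℕ => (c - d) / ((N:ℝ) + d)) atTop (𝓝 0) := by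
    apply Tendsto.div_atTop tendsto_const_nhds
    exact tendsto_atTop_add_const_right atTop d tendsto_natCast_atTop_atTop
  have h : Tendsto (fun N : ℕ => 1 + (c - d) / ((N:ℝ) + d)) atTop (𝓝 (1 + 0)) :=
    tendsto_const_nhds.add hd2
  rw [add_zero] at h
  apply h.congr'
  filter_upwards [eventually_gt_atTop 0] with N hN
  have h4 : ((N:ℝ) + d) ≠ 0 := by
    have : (1:ℝ) ≤ (N:ℝ) := Nat.one_le_cast.mpr hN
    positivity
  field_simp
  ring

lemma qco_sum_lim :
    Tendsto (fun N : ℕ => ∑ n ∈ Finset.range N, qco a n) atTop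
      (𝓝 (Real.sin (π * a) / (π * (a*(1-a))))) := by
  have hb0 : 0 < a*(1-a) := by nlinarith
  have h1 : Tendsto (fun N : ℕ => ((N:ℝ) * cc a N) *
      (((N:ℝ) + (1 + a*(1-a))) / ((N:ℝ) + 1) / (a*(1-a)))) atTop
      (𝓝 ((Real.sin (π * a) / π) * (1 / (a*(1-a))))) := by
    apply (Ncc_lim ha ha1).mul
    have := (ratio_lim ha ha1 (1 + a*(1-a)) 1 (by norm_num)).div_const (a*(1-a))
    rwa [one_div] at this ⊢
  have he : (Real.sin (π * a) / π) * (1 / (a*(1-a))) = Real.sin (π * a) / (π * (a*(1-a))) := by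
    field_simp
  rw [he] at h1
  apply h1.congr
  intro N
  rw [qco_partial_sum ha ha1]
  have h2 : ((N:ℝ)+1) ≠ 0 := by positivity
  field_simp
  ring

lemma eco_sum_lim :
    Tendsto (fun N : ℕ => ∑ n ∈ Finset.range N, eco a n) atTop
      (𝓝 (Real.sin (π * a) / π)) := by
  have h1 : Tendsto (fun N : ℕ => ((N:ℝ)+1) * cc a (N+1)) atTop
      (𝓝 (Real.sin (π * a) / π)) := by
    have := (Ncc_lim ha ha1).comp (tendsto_add_atTop_nat 1)
    apply this.congr
    intro N
    simp only [Function.comp]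
    push_cast
    ring
  have h2 := h1.mul (ratio_lim ha ha1 0 2 (by norm_num))
  rw [mul_one] at h2
  apply h2.congr
  intro N
  rw [eco_partial_sum ha ha1]
  have h3 : ((N:ℝ)+2) ≠ 0 := by positivity
  field_simp
  ring


lemma sin_pos_a : 0 < Real.sin (π * a) := by
  apply Real.sin_pos_of_pos_of_lt_pi (by positivity)
  nlinarith [Real.pi_pos]

lemma qq_strictMono {x y : ℝ} (hx : 0 ≤ x) (hxy : x < y) (hy : y < 1) :
    qq a x < qq a y := by
  have hax : |x| < 1 := by rw [abs_of_nonneg hx]; linarith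
  have hay : |y| < 1 := by rw [abs_of_nonneg (by linarith)]; linarith
  have hb0 : 0 < a*(1-a) := bb_pos ha ha1
  apply Summable.tsum_lt_tsum (i := 1)
  · intro n
    apply mul_le_mul_of_nonneg_left (pow_le_pow_left₀ hx hxy.le n)
    rw [qco]
    have := cc_pos ha ha1 n
    positivity
  · simp only [pow_one]
    apply mul_lt_mul_of_pos_left hxy
    rw [qco]
    have := cc_pos ha ha1 1
    positivity
  · exact aux_summable (qco_bound ha ha1) hax
  · exact aux_summable (qco_bound ha ha1) hay

lemma psi_strictMono {x y : ℝ} (hx : 0 ≤ x) (hxy : x < y) (hy : y < 1) :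
    psi a x < psi a y := by
  have hax : |x| < 1 := by rw [abs_of_nonneg hx]; linarith
  have hay : |y| < 1 := by rw [abs_of_nonneg (by linarith)]; linarith
  have hb0 : 0 < a*(1-a) := bb_pos ha ha1
  apply Summable.tsum_lt_tsum (i := 1)
  · intro n
    apply mul_le_mul_of_nonneg_left (pow_le_pow_left₀ hx hxy.le n)
    rw [eco]
    have := cc_pos ha ha1 (n+1)
    positivity
  · simp only [pow_one]
    apply mul_lt_mul_of_pos_left hxy
    rw [eco]
    have := cc_pos ha ha1 2
    positivity
  · exact aux_summable (eco_bound ha ha1) hax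
  · exact aux_summable (eco_bound ha ha1) hay

lemma qq_tendsto :
    Tendsto (qq a) (𝓝[<] (1:ℝ)) (𝓝 (Real.sin (π * a) / (π * (a*(1-a))))) :=
  Real.tendsto_tsum_powerSeries_nhdsWithin_lt (qco_sum_lim ha ha1)

lemma psi_tendsto :
    Tendsto (psi a) (𝓝[<] (1:ℝ)) (𝓝 (Real.sin (π * a) / π)) :=
  Real.tendsto_tsum_powerSeries_nhdsWithin_lt (eco_sum_lim ha ha1)

lemma qq_lt_limit {x : ℝ} (hx : 0 ≤ x) (hx1 : x < 1) :
    qq a x < Real.sin (π * a) / (π * (a*(1-a))) := by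
  set y := (x+1)/2 with hy
  have hy1 : y < 1 := by rw [hy]; linarith
  have hxy : x < y := by rw [hy]; linarith
  have h1 : qq a x < qq a y := qq_strictMono ha ha1 hx hxy hy1
  have h2 : qq a y ≤ Real.sin (π * a) / (π * (a*(1-a))) := by
    apply ge_of_tendsto (qq_tendsto ha ha1)
    filter_upwards [Ioo_mem_nhdsLT hy1] with t ht
    exact (qq_strictMono ha ha1 (by linarith [ht.1] : (0:ℝ) ≤ y) ht.1 ht.2).le
  linarith

lemma qq_zero : qq a 0 = 1 + a*(1-a)/2 := by
  rw [qq, tsum_eq_single 0 (fun n hn => by simp [zero_pow hn])]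
  rw [qco, cc_zero]
  norm_num
  ring

noncomputable def pfun (a lam x : ℝ) : ℝ :=
  1 - lam*(1-x) - (π * (a*(1-a)) / Real.sin (π * a)) * qq a x

lemma lam_pos {lam : ℝ}
    (h2 : 1 - π * a * (1 - a) / Real.sin (π * a)
      - π * a^2 * (1 - a)^2 / (2 * Real.sin (π * a)) < lam) : 0 < lam := by
  have hs := sin_pos_a ha ha1
  have hb0 := bb_pos ha ha1
  have hq0 := qq_lt_limit ha ha1 (le_refl 0) one_pos
  rw [qq_zero ha ha1] at hq0
  -- (π β / s) * (1+β/2) < 1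
  have hfrac : π * (a*(1-a)) / Real.sin (π * a) * (1 + a*(1-a)/2) < 1 := by
    rw [div_mul_eq_mul_div, div_lt_one hs]
    have h3 := (lt_div_iff₀ (show (0:ℝ) < π * (a*(1-a)) by positivity)).mp hq0
    nlinarith
  have key : 1 - π * a * (1 - a) / Real.sin (π * a)
      - π * a^2 * (1 - a)^2 / (2 * Real.sin (π * a))
      = 1 - π * (a*(1-a)) / Real.sin (π * a) * (1 + a*(1-a)/2) := by
    field_simp
    ring
  rw [key] at h2
  linarith

lemma pfun_zero_neg {lam : ℝ}
    (h2 : 1 - π * a * (1 - a) / Real.sin (π * a)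
      - π * a^2 * (1 - a)^2 / (2 * Real.sin (π * a)) < lam) :
    pfun a lam 0 < 0 := by
  have hs := sin_pos_a ha ha1
  rw [pfun, qq_zero ha ha1]
  have key : 1 - π * a * (1 - a) / Real.sin (π * a)
      - π * a^2 * (1 - a)^2 / (2 * Real.sin (π * a))
      = 1 - π * (a*(1-a)) / Real.sin (π * a) * (1 + a*(1-a)/2) := by
    field_simp
    ring
  rw [key] at h2
  linarith

lemma pfun_tendsto (lam : ℝ) : Tendsto (pfun a lam) (𝓝[<] (1:ℝ)) (𝓝 0) := by
  have hs := sin_pos_a ha ha1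
  have hb0 := bb_pos ha ha1
  have h1 : Tendsto (fun x : ℝ => 1 - lam*(1-x)) (𝓝[<] (1:ℝ)) (𝓝 (1 - lam*(1-1))) := by
    apply Tendsto.mono_left _ nhdsWithin_le_nhds
    exact Continuous.tendsto (by continuity) 1
  have h2 := h1.sub ((qq_tendsto ha ha1).const_mul (π * (a*(1-a)) / Real.sin (π * a)))
  have he : (1 - lam*(1-1)) - (π * (a*(1-a)) / Real.sin (π * a))
      * (Real.sin (π * a) / (π * (a*(1-a)))) = 0 := by
    have hp : (π * (a*(1-a))) ≠ 0 := by positivity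
    field_simp
    rw [div_self (by linarith : (1:ℝ)-a ≠ 0)]; ring
  rw [he] at h2
  exact h2

lemma pfun_hasDerivAt (lam : ℝ) {x : ℝ} (hx : |x| < 1) :
    HasDerivAt (pfun a lam)
      (lam - (π * (a*(1-a)) / Real.sin (π * a)) * psi a x) x := by
  have h1 := (qq_hasDerivAt ha ha1 hx).const_mul (π * (a*(1-a)) / Real.sin (π * a))
  have h2 : HasDerivAt (fun y : ℝ => 1 - lam*(1-y)) lam x := by
    have : HasDerivAt (fun y : ℝ => 1 - lam*(1-y)) (0 - lam * (0 - 1)) x := by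
      exact (hasDerivAt_const x 1).sub (((hasDerivAt_const x 1).sub (hasDerivAt_id x)).const_mul lam)
    simpa using this
  exact h2.sub h1

lemma pfun_deriv_tendsto (lam : ℝ) :
    Tendsto (fun x => lam - (π * (a*(1-a)) / Real.sin (π * a)) * psi a x)
      (𝓝[<] (1:ℝ)) (𝓝 (lam - a*(1-a))) := by
  have hs := sin_pos_a ha ha1
  have hb0 := bb_pos ha ha1
  have h2 := (tendsto_const_nhds (x := lam) (f := 𝓝[<] (1:ℝ))).sub
    ((psi_tendsto ha ha1).const_mul (π * (a*(1-a)) / Real.sin (π * a)))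
  have he : lam - (π * (a*(1-a)) / Real.sin (π * a)) * (Real.sin (π * a) / π)
      = lam - a*(1-a) := by
    field_simp
  rw [he] at h2
  exact h2


omit ha ha1 in
lemma conc_pos {f : ℝ → ℝ} (hf : ConcaveOn ℝ (Ico (0:ℝ) 1) f) {x t z : ℝ}
    (hx : x ∈ Ico (0:ℝ) 1) (hz : z ∈ Ico (0:ℝ) 1) (hxt : x < t) (htz : t < z)
    (hfx : 0 ≤ f x) (hfz : 0 < f z) : 0 < f t := by
  have hzx : 0 < z - x := by linarith
  set θ := (z-t)/(z-x) with hθdef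
  set σ := (t-x)/(z-x) with hσdef
  have hθ : 0 ≤ θ := by apply div_nonneg <;> linarith
  have hσ : 0 < σ := by apply div_pos <;> linarith
  have hsum : θ + σ = 1 := by rw [hθdef, hσdef]; field_simp; ring
  have h := hf.2 hx hz hθ hσ.le hsum
  have ht : θ • x + σ • z = t := by
    rw [smul_eq_mul, smul_eq_mul, hθdef, hσdef]
    field_simp
    ring
  rw [ht] at h
  have : 0 < θ • f x + σ • f z := by
    rw [smul_eq_mul, smul_eq_mul]
    nlinarith
  linarith

lemma pfun_sign {lam : ℝ}
    (h2 : 1 - π * a * (1 - a) / Real.sin (π * a)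
      - π * a^2 * (1 - a)^2 / (2 * Real.sin (π * a)) < lam)
    (hblam : lam < a * (1-a)) :
    ∃ t₀ ∈ Ioo (0:ℝ) 1, (∀ t ∈ Ioo (0:ℝ) t₀, pfun a lam t < 0) ∧
      (∀ t ∈ Ioo t₀ (1:ℝ), 0 < pfun a lam t) := by
  have hs := sin_pos_a ha ha1
  have hb0 := bb_pos ha ha1
  have habs : ∀ x : ℝ, x ∈ Ico (0:ℝ) 1 → |x| < 1 := by
    intro x hx; rw [abs_of_nonneg hx.1]; exact hx.2
  -- continuity on Ico 0 1
  have hcont : ContinuousOn (pfun a lam) (Ico (0:ℝ) 1) := by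
    intro x hx
    exact ((pfun_hasDerivAt ha ha1 lam (habs x hx)).continuousAt).continuousWithinAt
  -- derivative equality on (-1,1)
  have hderiv : ∀ x : ℝ, |x| < 1 → deriv (pfun a lam) x
      = lam - (π * (a*(1-a)) / Real.sin (π * a)) * psi a x := fun x hx =>
    (pfun_hasDerivAt ha ha1 lam hx).deriv
  -- deriv strictly anti on Ioo 0 1
  have hanti : StrictAntiOn (deriv (pfun a lam)) (Ioo (0:ℝ) 1) := by
    intro x hx y hy hxy
    rw [hderiv x (habs x (Ioo_subset_Ico_self hx)), hderiv y (habs y (Ioo_subset_Ico_self hy))]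
    have := psi_strictMono ha ha1 hx.1.le hxy hy.2
    have hK : 0 < π * (a*(1-a)) / Real.sin (π * a) := by positivity
    nlinarith
  -- concavity
  have hconc : ConcaveOn ℝ (Ico (0:ℝ) 1) (pfun a lam) := by
    have := StrictAntiOn.strictConcaveOn_of_deriv (convex_Ico (0:ℝ) 1) hcont
      (by rwa [interior_Ico])
    exact this.concaveOn
  -- eventually deriv < 0 near 1
  have hd0 : ∀ᶠ x in 𝓝[<] (1:ℝ), deriv (pfun a lam) x < 0 ∧ (0:ℝ) < x := by
    have h1 : ∀ᶠ x in 𝓝[<] (1:ℝ),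
        lam - (π * (a*(1-a)) / Real.sin (π * a)) * psi a x < 0 := by
      apply (pfun_deriv_tendsto ha ha1 lam).eventually_lt_const
      linarith
    have h2 : ∀ᶠ x in 𝓝[<] (1:ℝ), (0:ℝ) < x ∧ x < 1 := by
      filter_upwards [Ioo_mem_nhdsLT (show (0:ℝ) < 1 by norm_num)] with t ht
      exact ⟨ht.1, ht.2⟩
    filter_upwards [h1, h2] with x hx1 hx2
    refine ⟨?_, hx2.1⟩
    rwa [hderiv x (by rw [abs_of_pos hx2.1]; exact hx2.2)]
  obtain ⟨l, hl1, hl⟩ := mem_nhdsLT_iff_exists_Ioo_subset.mp hd0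
  set u : ℝ := max l 0 with hudef
  have hu1 : u < 1 := max_lt hl1 (by norm_num)
  have hdneg : ∀ t ∈ Ioo u (1:ℝ), deriv (pfun a lam) t < 0 := by
    intro t ht
    exact (hl ⟨lt_of_le_of_lt (le_max_left l 0) ht.1, ht.2⟩).1
  have hu0 : 0 ≤ u := le_max_right l 0
  -- pfun strictly anti on Ico u 1
  have hpanti : StrictAntiOn (pfun a lam) (Ico u 1) := by
    apply strictAntiOn_of_deriv_neg (convex_Ico u 1)
      (hcont.mono (Ico_subset_Ico_left hu0))
    rw [interior_Ico]
    intro x hx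
    exact hdneg x hx
  -- pfun > 0 on Ioo u 1
  have hpos : ∀ t ∈ Ioo u (1:ℝ), 0 < pfun a lam t := by
    have hnonneg : ∀ t ∈ Ioo u (1:ℝ), 0 ≤ pfun a lam t := by
      intro t ht
      apply le_of_tendsto (pfun_tendsto ha ha1 lam)
      filter_upwards [Ioo_mem_nhdsLT ht.2] with y hy
      exact (hpanti ⟨ht.1.le, ht.2⟩ ⟨(ht.1.trans hy.1).le, hy.2⟩ hy.1).le
    intro t ht
    have hmid : (t+1)/2 ∈ Ioo u (1:ℝ) := by
      constructor <;> [linarith [ht.1]; linarith [ht.2]]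
    have hstep := hpanti ⟨ht.1.le, ht.2⟩ ⟨hmid.1.le, hmid.2⟩
      (show t < (t+1)/2 by linarith [ht.2])
    have h0 := hnonneg _ hmid
    linarith
  -- pfun < 0 near 0
  have hp0 := pfun_zero_neg ha ha1 h2
  have hnear0 : ∃ δ : ℝ, 0 < δ ∧ δ < 1 ∧ ∀ t : ℝ, 0 ≤ t → t < δ → pfun a lam t < 0 := by
    have hc0 : ContinuousAt (pfun a lam) 0 :=
      (pfun_hasDerivAt ha ha1 lam (by norm_num)).continuousAt
    have hev : ∀ᶠ t in 𝓝 (0:ℝ), pfun a lam t < 0 := by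
      have := hc0.eventually_mem (isOpen_Iio.mem_nhds (show pfun a lam 0 ∈ Iio (0:ℝ) from hp0))
      simpa using this
    rw [Metric.eventually_nhds_iff] at hev
    obtain ⟨ε, hε, hball⟩ := hev
    refine ⟨min ε (1/2), by positivity, by
      apply lt_of_le_of_lt (min_le_right _ _); norm_num, ?_⟩
    intro t ht0 htδ
    apply hball
    rw [Real.dist_eq, sub_zero, abs_of_nonneg ht0]
    exact lt_of_lt_of_le htδ (min_le_left _ _)
  obtain ⟨δ, hδ0, hδ1, hδ⟩ := hnear0
  -- the set S
  set S : Set ℝ := {t | t ∈ Ioo (0:ℝ) 1 ∧ 0 < pfun a lam t} with hSdef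
  have hmS : (u+1)/2 ∈ S := by
    have hm : (u+1)/2 ∈ Ioo u (1:ℝ) := by constructor <;> linarith
    exact ⟨⟨by linarith, hm.2⟩, hpos _ hm⟩
  have hSne : S.Nonempty := ⟨_, hmS⟩
  have hSbdd : BddBelow S := ⟨0, fun x hx => hx.1.1.le⟩
  set t₀ : ℝ := sInf S with ht₀def
  have ht₀δ : δ ≤ t₀ := by
    apply le_csInf hSne
    intro x hx
    by_contra hcon
    push_neg at hcon
    exact absurd hx.2 (not_lt.mpr (hδ x hx.1.1.le hcon).le)
  have ht₀pos : 0 < t₀ := lt_of_lt_of_le hδ0 ht₀δ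
  have ht₀lt : t₀ < 1 := by
    have := csInf_le hSbdd hmS
    have : t₀ ≤ (u+1)/2 := this
    linarith
  refine ⟨t₀, ⟨ht₀pos, ht₀lt⟩, ?_, ?_⟩
  · -- negative on (0, t₀)
    intro t ht
    have htS : t ∉ S := fun hmem => absurd (csInf_le hSbdd hmem) (not_le.mpr ht.2)
    have ht1 : t < 1 := ht.2.trans ht₀lt
    have hle : pfun a lam t ≤ 0 := by
      by_contra hcon
      push_neg at hcon
      exact htS ⟨⟨ht.1, ht1⟩, hcon⟩
    rcases lt_or_eq_of_le hle with h | h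
    · exact h
    · -- pfun t = 0 leads to contradiction
      exfalso
      set y := (t + t₀)/2 with hydef
      have hyt : t < y := by rw [hydef]; linarith [ht.2]
      have hyt₀ : y < t₀ := by rw [hydef]; linarith [ht.2]
      have hy1 : y < 1 := hyt₀.trans ht₀lt
      have hyS : y ∉ S := fun hmem => absurd (csInf_le hSbdd hmem) (not_le.mpr hyt₀)
      have hy_nonpos : pfun a lam y ≤ 0 := by
        by_contra hcon
        push_neg at hcon
        exact hyS ⟨⟨ht.1.trans hyt, hy1⟩, hcon⟩
      set z := max ((y+1)/2) ((u+1)/2) with hzdef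
      have hz : z ∈ Ioo u (1:ℝ) := by
        constructor
        · apply lt_of_lt_of_le _ (le_max_right _ _); linarith
        · apply max_lt <;> linarith
      have hyz : y < z := lt_of_lt_of_le (by linarith : y < (y+1)/2) (le_max_left _ _)
      have hzpos := hpos z hz
      have := conc_pos hconc (x := t) (t := y) (z := z)
        ⟨ht.1.le, ht1⟩ ⟨by linarith [hz.1], hz.2⟩ hyt hyz (le_of_eq h.symm) hzpos
      linarith
  · -- positive on (t₀, 1)
    intro t ht
    obtain ⟨x, hxS, hxt⟩ := (csInf_lt_iff hSbdd hSne).mp ht.1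
    set z := max ((t+1)/2) ((u+1)/2) with hzdef
    have hz : z ∈ Ioo u (1:ℝ) := by
      constructor
      · apply lt_of_lt_of_le _ (le_max_right _ _); linarith
      · apply max_lt <;> [linarith [ht.2]; linarith]
    have htz : t < z := lt_of_lt_of_le (by linarith [ht.2] : t < (t+1)/2) (le_max_left _ _)
    exact conc_pos hconc (x := x) (t := t) (z := z)
      ⟨hxS.1.1.le, hxS.1.2⟩ ⟨by linarith [hz.1], hz.2⟩ hxt htz hxS.2.le (hpos z hz)


lemma cc_bound : ∀ n : ℕ, |cc a n| ≤ 3 * ((n:ℝ)+1) := by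
  intro n
  have h1 := cc_pos ha ha1 n
  have h2 := cc_le_one ha ha1 n
  rw [abs_of_pos h1]
  have : (0:ℝ) ≤ (n:ℝ) := Nat.cast_nonneg n
  nlinarith

lemma ec_bound : ∀ n : ℕ, |ec a n| ≤ 3 * ((n:ℝ)+1) := by
  intro n
  have h1 := abs_ec_le ha ha1 n
  have : (0:ℝ) ≤ (n:ℝ) := Nat.cast_nonneg n
  nlinarith

lemma Ea_Ka_identity {r : ℝ} (hr0 : 0 < r) (hr1 : r < 1) :
    Ea a r - (1 - r^2) * Ka a r = π * a / 2 * (r^2 * Phi a (r^2)) := by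
  set x := r^2 with hxdef
  have hx0 : 0 < x := by positivity
  have hx1 : x < 1 := by rw [hxdef]; nlinarith
  have hax : |x| < 1 := by rw [abs_of_pos hx0]; exact hx1
  have hKa : Ka a r = π/2 * ∑' n : ℕ, cc a n * x^n := by
    rw [Ka]
    congr 1
    apply tsum_congr
    intro n
    rw [cc, pow_mul]
  have hEa : Ea a r = π/2 * ∑' n : ℕ, ec a n * x^n := by
    rw [Ea]
    congr 1
    apply tsum_congr
    intro n
    rw [ec, pow_mul]
  have hsum_cc := aux_summable (cc_bound ha ha1) hax
  have hsum_ec := aux_summable (ec_bound ha ha1) hax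
  have hsum_diff : Summable (fun n : ℕ => (ec a n - cc a n) * x^n) :=
    (hsum_ec.sub hsum_cc).congr (fun n => by ring)
  -- shifted sums
  have hsum_sh1 : Summable (fun n : ℕ => -(cc a n * (((n:ℝ)+1-a)/((n:ℝ)+1))) * x^(n+1)) := by
    have hb : ∀ n : ℕ, |(-(cc a n * (((n:ℝ)+1-a)/((n:ℝ)+1)))) * x| ≤ 3*((n:ℝ)+1) := by
      intro n
      rw [abs_mul, abs_neg, abs_mul]
      have h1 := cc_pos ha ha1 n
      have h2 := cc_le_one ha ha1 n
      have h3 : (0:ℝ) < (n:ℝ)+1 := by positivity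
      have h4 : |(((n:ℝ)+1-a)/((n:ℝ)+1))| ≤ 1 := by
        rw [abs_div, abs_of_pos h3, div_le_one h3, abs_of_pos (by linarith)]
        linarith
      have h5 : |x| ≤ 1 := by rw [abs_of_pos hx0]; linarith
      have h6 : |cc a n| ≤ 1 := by rw [abs_of_pos h1]; exact h2
      have := Nat.cast_nonneg (α := ℝ) n
      nlinarith [abs_nonneg (cc a n), abs_nonneg (((n:ℝ)+1-a)/((n:ℝ)+1)), abs_nonneg x,
        mul_le_one₀ h6 (abs_nonneg _) h4]
    have := aux_summable hb hax
    apply this.congr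
    intro n
    rw [pow_succ]
    ring
  have hsum_B : Summable (fun n : ℕ => cc a n * x^(n+1)) := by
    apply (hsum_cc.mul_left x).congr
    intro n
    rw [pow_succ]
    ring
  -- step 1: difference series equals shifted series
  have step1 : (∑' n : ℕ, (ec a n - cc a n) * x^n)
      = ∑' n : ℕ, -(cc a n * (((n:ℝ)+1-a)/((n:ℝ)+1))) * x^(n+1) := by
    rw [Summable.tsum_eq_zero_add hsum_diff]
    rw [ec_zero, cc_zero]
    simp only [sub_self, zero_mul, zero_add]
    apply tsum_congr
    intro n
    rw [ec_sub_cc_succ]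
  -- step 2: add B
  have step2 : (∑' n : ℕ, (ec a n - cc a n) * x^n) + (∑' n : ℕ, cc a n * x^(n+1))
      = ∑' n : ℕ, (cc a n * (a/((n:ℝ)+1))) * x^(n+1) := by
    rw [step1, ← Summable.tsum_add hsum_sh1 hsum_B]
    apply tsum_congr
    intro n
    have h3 : ((n:ℝ)+1) ≠ 0 := by positivity
    field_simp
    ring
  -- step 3: relate to Phi
  have step3 : (∑' n : ℕ, (cc a n * (a/((n:ℝ)+1))) * x^(n+1)) = a * (x * Phi a x) := by
    rw [Phi, ← tsum_mul_left, ← tsum_mul_left]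
    apply tsum_congr
    intro n
    rw [pco, pow_succ]
    ring
  -- step 4: B = x * (sum cc)
  have step4 : (∑' n : ℕ, cc a n * x^(n+1)) = x * ∑' n : ℕ, cc a n * x^n := by
    rw [← tsum_mul_left]
    apply tsum_congr
    intro n
    rw [pow_succ]
    ring
  -- assemble
  have hdiff : (∑' n : ℕ, ec a n * x^n) - (∑' n : ℕ, cc a n * x^n)
      = ∑' n : ℕ, (ec a n - cc a n) * x^n := by
    rw [← Summable.tsum_sub hsum_ec hsum_cc]
    apply tsum_congr
    intro n
    ring
  rw [hEa, hKa]
  have : (∑' n : ℕ, ec a n * x^n) - (1-x) * (∑' n : ℕ, cc a n * x^n)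
      = a * (x * Phi a x) := by
    have expand : (∑' n : ℕ, ec a n * x^n) - (1-x) * (∑' n : ℕ, cc a n * x^n)
        = ((∑' n : ℕ, ec a n * x^n) - (∑' n : ℕ, cc a n * x^n))
          + x * (∑' n : ℕ, cc a n * x^n) := by ring
    rw [expand, hdiff, ← step4, step2, step3]
  calc π/2 * (∑' n : ℕ, ec a n * x^n) - (1-x) * (π/2 * ∑' n : ℕ, cc a n * x^n)
      = π/2 * ((∑' n : ℕ, ec a n * x^n) - (1-x) * (∑' n : ℕ, cc a n * x^n)) := by ring
    _ = π/2 * (a * (x * Phi a x)) := by rw [this]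
    _ = π * a / 2 * (x * Phi a x) := by ring


lemma Hfun_hasDerivAt {lam : ℝ} (hlam : lam ≠ 0) {x : ℝ} (hx : |x| < 1) :
    HasDerivAt (fun y : ℝ => 1/2 * Real.log (1-y)
        + (Real.sin (π*a) - π*(a*(1-a)) * Phi a y) / (2*lam*(1-y)*Real.sin (π*a)))
      (pfun a lam x / (2*lam*(1-x)^2)) x := by
  have hs := sin_pos_a ha ha1
  have hx1 : x < 1 := lt_of_le_of_lt (le_abs_self x) hx
  have h1x : (1:ℝ) - x ≠ 0 := by
    have : x < 1 := hx1
    intro h; linarith [(sub_eq_zero.mp h).symm]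
  have h1x' : 0 < 1 - x := by
    rcases lt_or_gt_of_ne h1x with h | h <;> linarith
  have h1 : HasDerivAt (fun y : ℝ => 1 - y) (-1) x := by
    simpa using (hasDerivAt_id x).const_sub 1
  have hlog : HasDerivAt (fun y : ℝ => 1/2 * Real.log (1-y)) (1/2 * ((1-x)⁻¹ * -1)) x := by
    exact ((Real.hasDerivAt_log h1x).comp x h1).const_mul (1/2)
  have hnum : HasDerivAt (fun y : ℝ => Real.sin (π*a) - π*(a*(1-a)) * Phi a y)
      (-(π*(a*(1-a)) * Phi' a x)) x := by
    simpa using (((Phi_hasDerivAt ha ha1 hx).const_mul (π*(a*(1-a)))).const_sub (Real.sin (π*a)))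
  have hden : HasDerivAt (fun y : ℝ => 2*lam*(1-y)*Real.sin (π*a))
      (2*lam*(-1)*Real.sin (π*a)) x := by
    have := (h1.const_mul (2*lam)).mul_const (Real.sin (π*a))
    convert this using 1 <;> ring_nf
  have hden_ne : 2*lam*(1-x)*Real.sin (π*a) ≠ 0 := by
    apply mul_ne_zero (mul_ne_zero (mul_ne_zero two_ne_zero hlam) h1x) (ne_of_gt hs)
  have hdiv := hnum.div hden hden_ne
  have htot := hlog.add hdiv
  refine htot.congr_deriv ?_
  rw [pfun, key_q_identity ha ha1 hx]
  field_simp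
  ring

end main

theorem stmt15 (a : ℝ) (ha : a ∈ Set.Ioc (0 : ℝ) (1/2)) (lam : ℝ)
    (h2 : 1 - Real.pi * a * (1 - a) / Real.sin (Real.pi * a)
      - Real.pi * a^2 * (1 - a)^2 / (2 * Real.sin (Real.pi * a)) < lam)
    (hb : lam < a * (1 - a)) :
    ∃ r₀ ∈ Set.Ioo (0 : ℝ) 1,
      StrictAntiOn (fun r : ℝ =>
        1/2 - Real.log (Real.exp (ramanujanR a / 2) / Real.sqrt (1 - r^2))
          + (r^2 * Real.sin (Real.pi * a)
              - 2 * (1 - a) * (Ea a r - (Real.sqrt (1 - r^2))^2 * Ka a r))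
            / (2 * lam * r^2 * (Real.sqrt (1 - r^2))^2 * Real.sin (Real.pi * a)))
        (Set.Ioo 0 r₀) ∧
      StrictMonoOn (fun r : ℝ =>
        1/2 - Real.log (Real.exp (ramanujanR a / 2) / Real.sqrt (1 - r^2))
          + (r^2 * Real.sin (Real.pi * a)
              - 2 * (1 - a) * (Ea a r - (Real.sqrt (1 - r^2))^2 * Ka a r))
            / (2 * lam * r^2 * (Real.sqrt (1 - r^2))^2 * Real.sin (Real.pi * a)))
        (Set.Ioo r₀ 1) := by
  obtain ⟨ha0, ha2⟩ := ha
  have ha1 : a < 1 := by linarith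
  have hs : 0 < Real.sin (π * a) := sin_pos_a ha0 ha1
  have hb0 : 0 < a * (1-a) := bb_pos ha0 ha1
  have hlam0 : 0 < lam := lam_pos ha0 ha1 h2
  obtain ⟨t₀, ht₀, hneg, hpos⟩ := pfun_sign ha0 ha1 h2 hb
  set r₀ : ℝ := Real.sqrt t₀ with hr₀def
  have hr₀0 : 0 < r₀ := Real.sqrt_pos.mpr ht₀.1
  have hr₀1 : r₀ < 1 := by
    rw [hr₀def]
    rw [show (1:ℝ) = Real.sqrt 1 by rw [Real.sqrt_one]]
    exact Real.sqrt_lt_sqrt ht₀.1.le ht₀.2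
  have hr₀sq : r₀^2 = t₀ := Real.sq_sqrt ht₀.1.le
  -- the auxiliary function
  set F : ℝ → ℝ := fun r => 1/2 - ramanujanR a / 2
    + (1/2 * Real.log (1-r^2)
        + (Real.sin (π*a) - π*(a*(1-a)) * Phi a (r^2)) / (2*lam*(1-r^2)*Real.sin (π*a)))
    with hFdef
  -- derivative of F
  have hGd : ∀ r : ℝ, r ∈ Ioo (0:ℝ) 1 →
      HasDerivAt F (pfun a lam (r^2) / (2*lam*(1-r^2)^2) * (2*r)) r := by
    intro r hr
    have hxabs : |r^2| < 1 := by
      rw [abs_of_pos (pow_pos hr.1 2)]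
      nlinarith [hr.1, hr.2]
    have hH := Hfun_hasDerivAt ha0 ha1 (ne_of_gt hlam0) hxabs
    have hpow : HasDerivAt (fun y : ℝ => y^2) (2*r) r := by
      have h := hasDerivAt_pow 2 r
      norm_num at h
      exact h
    have hcomp := HasDerivAt.comp (h := fun y : ℝ => y ^ 2) r hH hpow
    have := hcomp.const_add (1/2 - ramanujanR a / 2)
    exact this
  -- equality of F with the statement's function on Ioo 0 1
  have hEqOn : ∀ r ∈ Ioo (0:ℝ) 1,
      (1/2 - Real.log (Real.exp (ramanujanR a / 2) / Real.sqrt (1 - r^2))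
          + (r^2 * Real.sin (Real.pi * a)
              - 2 * (1 - a) * (Ea a r - (Real.sqrt (1 - r^2))^2 * Ka a r))
            / (2 * lam * r^2 * (Real.sqrt (1 - r^2))^2 * Real.sin (Real.pi * a))) = F r := by
    intro r hr
    have h1r : 0 < 1 - r^2 := by nlinarith [hr.1, hr.2]
    have hsq : (Real.sqrt (1 - r^2))^2 = 1 - r^2 := Real.sq_sqrt h1r.le
    have hsqrt_pos : 0 < Real.sqrt (1 - r^2) := Real.sqrt_pos.mpr h1r
    have hlog : Real.log (Real.exp (ramanujanR a / 2) / Real.sqrt (1 - r^2))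
        = ramanujanR a / 2 - 1/2 * Real.log (1 - r^2) := by
      rw [Real.log_div (Real.exp_ne_zero _) (ne_of_gt hsqrt_pos), Real.log_exp,
        Real.log_sqrt h1r.le]
      ring
    rw [hlog, hsq, Ea_Ka_identity ha0 ha1 hr.1 hr.2, hFdef]
    have hr2 : r^2 ≠ 0 := pow_ne_zero _ (ne_of_gt hr.1)
    have hlamne : lam ≠ 0 := ne_of_gt hlam0
    have hsne : Real.sin (π * a) ≠ 0 := ne_of_gt hs
    have h1rne : (1:ℝ) - r^2 ≠ 0 := ne_of_gt h1r
    have hr0 : r ≠ 0 := ne_of_gt hr.1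
    field_simp
    ring
  refine ⟨r₀, ⟨hr₀0, hr₀1⟩, ?_, ?_⟩
  · -- strictly decreasing on (0, r₀)
    have hsub : Ioo (0:ℝ) r₀ ⊆ Ioo (0:ℝ) 1 := Ioo_subset_Ioo le_rfl hr₀1.le
    have hF : StrictAntiOn F (Ioo (0:ℝ) r₀) := by
      apply strictAntiOn_of_deriv_neg (convex_Ioo _ _)
      · intro x hx
        exact (hGd x (hsub hx)).continuousAt.continuousWithinAt
      · rw [interior_Ioo]
        intro x hx
        rw [(hGd x (hsub hx)).deriv]
        have hx2 : x^2 ∈ Ioo (0:ℝ) t₀ := by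
          constructor
          · exact pow_pos hx.1 2
          · rw [← hr₀sq]; exact pow_lt_pow_left₀ hx.2 hx.1.le two_ne_zero
        have hp := hneg _ hx2
        have h1x2 : 0 < 1 - x^2 := by
          have := (hsub hx).2
          nlinarith [hx.1]
        apply mul_neg_of_neg_of_pos
        · exact div_neg_of_neg_of_pos hp (by positivity)
        · linarith [hx.1]
    apply StrictAntiOn.congr hF
    intro r hr
    exact (hEqOn r (hsub hr)).symm
  · -- strictly increasing on (r₀, 1)
    have hsub : Ioo r₀ (1:ℝ) ⊆ Ioo (0:ℝ) 1 := Ioo_subset_Ioo hr₀0.le le_rfl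
    have hF : StrictMonoOn F (Ioo r₀ (1:ℝ)) := by
      apply strictMonoOn_of_deriv_pos (convex_Ioo _ _)
      · intro x hx
        exact (hGd x (hsub hx)).continuousAt.continuousWithinAt
      · rw [interior_Ioo]
        intro x hx
        rw [(hGd x (hsub hx)).deriv]
        have hx0 : 0 < x := hr₀0.trans hx.1
        have hx2 : x^2 ∈ Ioo t₀ (1:ℝ) := by
          constructor
          · rw [← hr₀sq]; exact pow_lt_pow_left₀ hx.1 hr₀0.le two_ne_zero
          · nlinarith [hx.2]
        have hp := hpos _ hx2
        have h1x2 : 0 < 1 - x^2 := by nlinarith [hx.2]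
        apply mul_pos
        · exact div_pos hp (by positivity)
        · linarith
    apply StrictMonoOn.congr hF
    intro r hr
    exact (hEqOn r (hsub hr)).symm
end

section
/- For every x ∈ (0, 1/2], one has g₁(x) > 0, where g₁(x) = Σ_{k=0}^∞ ((2^{2k+4} − 2)/2^{2k+3})·(2k+1)(2k+2)·ζ(2k+4)·x^{2k} − Σ_{k=0}^∞ 2·(2k+2)(2k+3)·ζ(2k+5)·x^{2k+1}, with ζ the Riemann zeta function (both series converge for |x| < 1). -/
open Real Set Filter Topology

lemma hs_base {r : ℝ} (hr : |r| < 1) :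
    HasSum (fun m : ℕ => ((m:ℝ)+1)*((m:ℝ)+2) * r^m) (2/(1-r)^3) := by
  have h := (hasSum_choose_mul_geometric_of_norm_lt_one (𝕜 := ℝ) 2
      (by simpa [Real.norm_eq_abs] using hr)).mul_left 2
  have hfun : (fun m : ℕ => 2 * ((((m+2).choose 2 : ℕ) : ℝ) * r^m))
      = fun m : ℕ => ((m:ℝ)+1)*((m:ℝ)+2) * r^m := by
    funext m
    rw [Nat.cast_choose_two]
    push_cast
    ring
  rw [hfun] at h
  have hv : (2:ℝ) * (1 / (1-r)^(2+1)) = 2/(1-r)^3 := by ring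
  rwa [hv] at h

lemma hs_even {t : ℝ} (ht : |t| < 1) :
    HasSum (fun k : ℕ => (2*(k:ℝ)+1)*(2*(k:ℝ)+2) * t^(2*k)) (1/(1-t)^3 + 1/(1+t)^3) := by
  have h1 := hs_base ht
  have h2 := hs_base (r := -t) (by simpa using ht)
  have hadd := h1.add h2
  have hinj : Function.Injective (fun k : ℕ => 2*k) := by
    intro a b h
    simp only at h
    omega
  have hvan : ∀ m ∉ Set.range (fun k : ℕ => 2*k),
      ((m:ℝ)+1)*((m:ℝ)+2) * t^m + ((m:ℝ)+1)*((m:ℝ)+2) * (-t)^m = 0 := by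
    intro m hm
    have hodd : Odd m := by
      rcases Nat.even_or_odd m with he | ho
      · obtain ⟨r, hr⟩ := he
        exact absurd ⟨r, show 2*r = m by omega⟩ hm
      · exact ho
    rw [hodd.neg_pow]
    ring
  have h3 := (hinj.hasSum_iff hvan).mpr hadd
  have h4 := h3.mul_left (1/2)
  rw [Function.comp_def] at h4
  have hfun : (fun k : ℕ => (1/2) * ((((2*k : ℕ):ℝ)+1)*(((2*k : ℕ):ℝ)+2) * t^(2*k)
      + (((2*k : ℕ):ℝ)+1)*(((2*k : ℕ):ℝ)+2) * (-t)^(2*k)))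
      = fun k : ℕ => (2*(k:ℝ)+1)*(2*(k:ℝ)+2) * t^(2*k) := by
    funext k
    have h5 : (-t)^(2*k) = t^(2*k) := Even.neg_pow (even_two_mul k) t
    rw [h5]
    push_cast
    ring
  rw [hfun] at h4
  convert h4 using 1
  case e'_3 => rfl
  have hm : (1:ℝ) - -t = 1 + t := by ring
  rw [hm]
  ring

lemma hs_odd {t : ℝ} (ht : |t| < 1) :
    HasSum (fun k : ℕ => (2*(k:ℝ)+2)*(2*(k:ℝ)+3) * t^(2*k+1)) (1/(1-t)^3 - 1/(1+t)^3) := by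
  have h1 := hs_base ht
  have h2 := hs_base (r := -t) (by simpa using ht)
  have hsub := h1.sub h2
  have hinj : Function.Injective (fun k : ℕ => 2*k+1) := by
    intro a b h
    simp only at h
    omega
  have hvan : ∀ m ∉ Set.range (fun k : ℕ => 2*k+1),
      ((m:ℝ)+1)*((m:ℝ)+2) * t^m - ((m:ℝ)+1)*((m:ℝ)+2) * (-t)^m = 0 := by
    intro m hm
    have heven : Even m := by
      rcases Nat.even_or_odd m with he | ho
      · exact he
      · obtain ⟨r, hr⟩ := ho
        exact absurd ⟨r, show 2*r+1 = m by omega⟩ hm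
    rw [heven.neg_pow]
    ring
  have h3 := (hinj.hasSum_iff hvan).mpr hsub
  have h4 := h3.mul_left (1/2)
  rw [Function.comp_def] at h4
  have hfun : (fun k : ℕ => (1/2) * ((((2*k+1 : ℕ):ℝ)+1)*(((2*k+1 : ℕ):ℝ)+2) * t^(2*k+1)
      - (((2*k+1 : ℕ):ℝ)+1)*(((2*k+1 : ℕ):ℝ)+2) * (-t)^(2*k+1)))
      = fun k : ℕ => (2*(k:ℝ)+2)*(2*(k:ℝ)+3) * t^(2*k+1) := by
    funext k
    have h5 : (-t)^(2*k+1) = -(t^(2*k+1)) := Odd.neg_pow ⟨k, by omega⟩ t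
    rw [h5]
    push_cast
    ring
  rw [hfun] at h4
  convert h4 using 1
  case e'_3 => rfl
  have hm : (1:ℝ) - -t = 1 + t := by ring
  rw [hm]
  ring

lemma zsummable {m : ℕ} (hm : 2 ≤ m) : Summable (fun n : ℕ => 1/((n:ℝ)+1)^m) := by
  have h : Summable (fun n : ℕ => 1/(n:ℝ)^m) := summable_one_div_nat_pow.mpr (by omega)
  have h2 := (summable_nat_add_iff 1).mpr h
  exact h2.congr fun n => by push_cast; ring

lemma ztsum_nonneg (m : ℕ) : 0 ≤ ∑' n : ℕ, 1/((n:ℝ)+1)^m :=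
  tsum_nonneg fun n => by positivity

lemma ztsum_le_two {m : ℕ} (hm : 2 ≤ m) : ∑' n : ℕ, 1/((n:ℝ)+1)^m ≤ 2 := by
  have h2 : Summable (fun n : ℕ => 1/((n:ℝ)+1)^2) := zsummable le_rfl
  have hle : ∀ n : ℕ, 1/((n:ℝ)+1)^m ≤ 1/((n:ℝ)+1)^2 := by
    intro n
    apply one_div_le_one_div_of_le (by positivity)
    exact pow_le_pow_right₀ (by linarith [Nat.cast_nonneg (α := ℝ) n]) hm
  have step1 : ∑' n : ℕ, 1/((n:ℝ)+1)^m ≤ ∑' n : ℕ, 1/((n:ℝ)+1)^2 :=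
    Summable.tsum_le_tsum hle (zsummable hm) h2
  have hz := hasSum_zeta_two
  have hzs : Summable (fun n : ℕ => 1/(n:ℝ)^2) := hz.summable
  have hshift : ∑' n : ℕ, 1/(n:ℝ)^2 = 1/((0:ℕ):ℝ)^2 + ∑' n : ℕ, 1/((n+1:ℕ):ℝ)^2 :=
    Summable.tsum_eq_zero_add hzs
  have hv : ∑' n : ℕ, 1/((n:ℝ)+1)^2 = ∑' n : ℕ, 1/((n+1:ℕ):ℝ)^2 :=
    tsum_congr fun n => by push_cast; ring
  rw [hz.tsum_eq] at hshift
  simp only [Nat.cast_zero] at hshift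
  norm_num at hshift
  calc ∑' n : ℕ, 1/((n:ℝ)+1)^m ≤ ∑' n : ℕ, 1/((n:ℝ)+1)^2 := step1
    _ = ∑' n : ℕ, (((n:ℝ)+1)^2)⁻¹ := by simp only [one_div]
    _ = π^2/6 := hshift.symm
    _ ≤ 2 := by nlinarith [Real.pi_lt_d2, Real.pi_pos]

lemma zetaR_natCast (m : ℕ) : zetaR (m:ℝ) = ∑' n : ℕ, 1/((n:ℝ)+1)^m := by
  unfold zetaR
  congr 1
  funext n
  rw [Real.rpow_natCast]

lemma maj_summable {r : ℝ} (hr : |r| < 1) :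
    Summable (fun k : ℕ => ((k:ℝ)+1)^2 * r^k) := by
  have hr' : ‖r‖ < 1 := by simpa [Real.norm_eq_abs] using hr
  have h0 := summable_pow_mul_geometric_of_norm_lt_one (R := ℝ) 0 hr'
  have h1 := summable_pow_mul_geometric_of_norm_lt_one (R := ℝ) 1 hr'
  have h2 := summable_pow_mul_geometric_of_norm_lt_one (R := ℝ) 2 hr'
  have h := (h2.add (h1.mul_left 2)).add h0
  exact h.congr fun k => by ring
lemma hsA (x N : ℝ) (hx0 : 0 < x) (hx2 : x ≤ 1/2) (hN : 1 ≤ N) :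
    HasSum (fun k : ℕ => ((2:ℝ)^(2*k+4) - 2) / 2^(2*k+3) * (2*(k:ℝ)+1) * (2*(k:ℝ)+2)
        * (1/N^(2*k+4)) * x^(2*k))
      (2/N^4 * (1/(1-x/N)^3 + 1/(1+x/N)^3)
        - 1/(4*N^4) * (1/(1-x/(2*N))^3 + 1/(1+x/(2*N))^3)) := by
  have hN0 : (0:ℝ) < N := lt_of_lt_of_le one_pos hN
  have ht : |x/N| < 1 := by
    rw [abs_of_pos (div_pos hx0 hN0)]
    have := div_le_self hx0.le hN
    linarith
  have hu : |x/(2*N)| < 1 := by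
    rw [abs_of_pos (div_pos hx0 (by linarith))]
    have := div_le_self hx0.le (by linarith : 1 ≤ 2*N)
    linarith
  have h := ((hs_even ht).mul_left (2/N^4)).sub ((hs_even hu).mul_left (1/(4*N^4)))
  convert h using 1
  case e'_3 => rfl
  funext k
  rw [div_pow x N, div_pow x (2*N), mul_pow 2 N]
  have hN0' : N ≠ 0 := ne_of_gt hN0
  have h2 : ((2:ℝ)^(2*k)) ≠ 0 := by positivity
  have hNk : (N:ℝ)^(2*k) ≠ 0 := by positivity
  field_simp
  ring

lemma hsB (x N : ℝ) (hx0 : 0 < x) (hx2 : x ≤ 1/2) (hN : 1 ≤ N) :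
    HasSum (fun k : ℕ => 2 * (2*(k:ℝ)+2) * (2*(k:ℝ)+3) * (1/N^(2*k+5)) * x^(2*k+1))
      (2/N^4 * (1/(1-x/N)^3 - 1/(1+x/N)^3)) := by
  have hN0 : (0:ℝ) < N := lt_of_lt_of_le one_pos hN
  have ht : |x/N| < 1 := by
    rw [abs_of_pos (div_pos hx0 hN0)]
    have := div_le_self hx0.le hN
    linarith
  have h := (hs_odd ht).mul_left (2/N^4)
  convert h using 1
  case e'_3 => rfl
  funext k
  rw [div_pow x N]
  have hN0' : N ≠ 0 := ne_of_gt hN0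
  have hNk : (N:ℝ)^(2*k) ≠ 0 := by positivity
  field_simp
  ring

lemma Fpos (x N : ℝ) (hx0 : 0 < x) (hx2 : x ≤ 1/2) (hN : 1 ≤ N) :
    0 < (2/N^4 * (1/(1-x/N)^3 + 1/(1+x/N)^3)
        - 1/(4*N^4) * (1/(1-x/(2*N))^3 + 1/(1+x/(2*N))^3))
      - 2/N^4 * (1/(1-x/N)^3 - 1/(1+x/N)^3) := by
  have hN0 : (0:ℝ) < N := lt_of_lt_of_le one_pos hN
  have hueq : x/(2*N) = x/N/2 := by ring
  rw [hueq]
  set t := x/N with htdef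
  have ht0 : 0 < t := div_pos hx0 hN0
  have ht2 : t ≤ 1/2 := by
    have := div_le_self hx0.le hN
    simp only [← htdef] at this
    linarith
  have e1 : (8:ℝ)/27 ≤ 1/(1+t)^3 := by
    have h1 : (1+t)^3 ≤ (3/2:ℝ)^3 := pow_le_pow_left₀ (by linarith) (by linarith) 3
    have h2 := one_div_le_one_div_of_le (show (0:ℝ) < (1+t)^3 by positivity)
      (by norm_num at h1 ⊢; linarith : (1+t)^3 ≤ 27/8)
    calc (8:ℝ)/27 = 1/(27/8) := by norm_num
      _ ≤ 1/(1+t)^3 := h2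
  have e2 : 1/(1-t/2)^3 ≤ (64:ℝ)/27 := by
    have h1 : (3/4:ℝ)^3 ≤ (1-t/2)^3 := pow_le_pow_left₀ (by norm_num) (by linarith) 3
    have h2 := one_div_le_one_div_of_le (show (0:ℝ) < (3/4:ℝ)^3 by norm_num) h1
    calc 1/(1-t/2)^3 ≤ 1/(3/4:ℝ)^3 := h2
      _ = 64/27 := by norm_num
  have e3 : 1/(1+t/2)^3 ≤ 1 := by
    rw [div_le_one (by positivity)]
    calc (1:ℝ) = 1^3 := by norm_num
      _ ≤ (1+t/2)^3 := pow_le_pow_left₀ (by norm_num) (by linarith) 3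
  have hbr : 0 < 4*(1/(1+t)^3) - (1/4)*(1/(1-t/2)^3 + 1/(1+t/2)^3) := by linarith
  have hexp : (2/N^4 * (1/(1-t)^3 + 1/(1+t)^3)
        - 1/(4*N^4) * (1/(1-t/2)^3 + 1/(1+t/2)^3))
      - 2/N^4 * (1/(1-t)^3 - 1/(1+t)^3)
      = (1/N^4) * (4*(1/(1+t)^3) - (1/4)*(1/(1-t/2)^3 + 1/(1+t/2)^3)) := by ring
  rw [hexp]
  exact mul_pos (by positivity) hbr

set_option maxHeartbeats 1000000 in
theorem stmt18 (x : ℝ) (hx : x ∈ Set.Ioc (0 : ℝ) (1/2)) :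
    0 < (∑' k : ℕ, ((2 : ℝ)^(2*k+4) - 2) / 2^(2*k+3) * (2*(k : ℝ)+1) * (2*(k : ℝ)+2) *
          zetaR (2*(k : ℝ)+4) * x^(2*k))
        - ∑' k : ℕ, 2 * (2*(k : ℝ)+2) * (2*(k : ℝ)+3) * zetaR (2*(k : ℝ)+5) * x^(2*k+1) := by
  obtain ⟨hx0, hx2⟩ := hx
  have hx2' : x ≤ 1/2 := hx2
  have hN : ∀ n : ℕ, (1:ℝ) ≤ (n:ℝ)+1 := fun n => by
    have := Nat.cast_nonneg (α := ℝ) n; linarith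
  have hz4 : ∀ k : ℕ, zetaR (2*(k:ℝ)+4) = ∑' n : ℕ, 1/((n:ℝ)+1)^(2*k+4) := by
    intro k
    rw [show (2*(k:ℝ)+4) = ((2*k+4 : ℕ):ℝ) by push_cast; ring]
    exact zetaR_natCast _
  have hz5 : ∀ k : ℕ, zetaR (2*(k:ℝ)+5) = ∑' n : ℕ, 1/((n:ℝ)+1)^(2*k+5) := by
    intro k
    rw [show (2*(k:ℝ)+5) = ((2*k+5 : ℕ):ℝ) by push_cast; ring]
    exact zetaR_natCast _
  -- per-k slices
  have hfk : ∀ k : ℕ, HasSum (fun n : ℕ => ((2:ℝ)^(2*k+4) - 2) / 2^(2*k+3) * (2*(k:ℝ)+1)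
        * (2*(k:ℝ)+2) * (1/((n:ℝ)+1)^(2*k+4)) * x^(2*k))
      (((2:ℝ)^(2*k+4) - 2) / 2^(2*k+3) * (2*(k:ℝ)+1) * (2*(k:ℝ)+2)
        * zetaR (2*(k:ℝ)+4) * x^(2*k)) := by
    intro k
    rw [hz4 k]
    exact ((zsummable (show 2 ≤ 2*k+4 by omega)).hasSum.mul_left _).mul_right _
  have hgk : ∀ k : ℕ, HasSum (fun n : ℕ => 2 * (2*(k:ℝ)+2) * (2*(k:ℝ)+3)
        * (1/((n:ℝ)+1)^(2*k+5)) * x^(2*k+1))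
      (2 * (2*(k:ℝ)+2) * (2*(k:ℝ)+3) * zetaR (2*(k:ℝ)+5) * x^(2*k+1)) := by
    intro k
    rw [hz5 k]
    exact ((zsummable (show 2 ≤ 2*k+5 by omega)).hasSum.mul_left _).mul_right _
  -- coefficient bounds
  have hcd : ∀ k : ℕ, 0 ≤ ((2:ℝ)^(2*k+4) - 2) / 2^(2*k+3)
      ∧ ((2:ℝ)^(2*k+4) - 2) / 2^(2*k+3) ≤ 2 := by
    intro k
    have h2 : (2:ℝ) ≤ 2^(2*k+4) := by
      calc (2:ℝ) = 2^1 := (pow_one 2).symm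
        _ ≤ 2^(2*k+4) := pow_le_pow_right₀ one_le_two (by omega)
    have hden : (0:ℝ) < 2^(2*k+3) := by positivity
    refine ⟨div_nonneg (by linarith) hden.le, ?_⟩
    rw [div_le_iff₀ hden, show 2*k+4 = (2*k+3)+1 from rfl, pow_succ]
    linarith
  have hznn4 : ∀ k : ℕ, 0 ≤ zetaR (2*(k:ℝ)+4) := fun k => by
    rw [hz4 k]; exact ztsum_nonneg _
  have hzle4 : ∀ k : ℕ, zetaR (2*(k:ℝ)+4) ≤ 2 := fun k => by
    rw [hz4 k]; exact ztsum_le_two (by omega)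
  have hznn5 : ∀ k : ℕ, 0 ≤ zetaR (2*(k:ℝ)+5) := fun k => by
    rw [hz5 k]; exact ztsum_nonneg _
  have hzle5 : ∀ k : ℕ, zetaR (2*(k:ℝ)+5) ≤ 2 := fun k => by
    rw [hz5 k]; exact ztsum_le_two (by omega)
  have hxabs : |x^2| < 1 := by
    rw [abs_of_nonneg (sq_nonneg x)]; nlinarith [sq_nonneg x]
  -- summability of the alpha series
  have hαs : Summable (fun k : ℕ => ((2:ℝ)^(2*k+4) - 2) / 2^(2*k+3) * (2*(k:ℝ)+1)
      * (2*(k:ℝ)+2) * zetaR (2*(k:ℝ)+4) * x^(2*k)) := by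
    apply Summable.of_nonneg_of_le (f := fun k : ℕ => 16*(((k:ℝ)+1)^2*(x^2)^k))
    · intro k
      have h1 := (hcd k).1
      have h2 := hznn4 k
      have ha : (0:ℝ) ≤ 2*(k:ℝ)+1 := by positivity
      have hb : (0:ℝ) ≤ 2*(k:ℝ)+2 := by positivity
      have hp : (0:ℝ) ≤ x^(2*k) := by positivity
      exact mul_nonneg (mul_nonneg (mul_nonneg (mul_nonneg h1 ha) hb) h2) hp
    · intro k
      have hcd1 := (hcd k).1
      have hcd2 := (hcd k).2
      have hZ := hzle4 k
      have hZ0 := hznn4 k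
      have ha : (0:ℝ) ≤ 2*(k:ℝ)+1 := by positivity
      have hb : (0:ℝ) ≤ 2*(k:ℝ)+2 := by positivity
      have hxp : x^(2*k) = (x^2)^k := by rw [← pow_mul]
      have hpk : (0:ℝ) ≤ (x^2)^k := by positivity
      have s1 : ((2:ℝ)^(2*k+4) - 2) / 2^(2*k+3) * (2*(k:ℝ)+1) * (2*(k:ℝ)+2)
          ≤ 2*(2*(k:ℝ)+1)*(2*(k:ℝ)+2) :=
        mul_le_mul_of_nonneg_right (mul_le_mul_of_nonneg_right hcd2 ha) hb
      have s2 : ((2:ℝ)^(2*k+4) - 2) / 2^(2*k+3) * (2*(k:ℝ)+1) * (2*(k:ℝ)+2)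
            * zetaR (2*(k:ℝ)+4) ≤ (2*(2*(k:ℝ)+1)*(2*(k:ℝ)+2))*2 :=
        mul_le_mul s1 hZ hZ0 (by positivity)
      have s3 : (2*(2*(k:ℝ)+1)*(2*(k:ℝ)+2))*2 ≤ 16*((k:ℝ)+1)^2 := by
        nlinarith [Nat.cast_nonneg (α := ℝ) k]
      calc ((2:ℝ)^(2*k+4) - 2) / 2^(2*k+3) * (2*(k:ℝ)+1) * (2*(k:ℝ)+2)
            * zetaR (2*(k:ℝ)+4) * x^(2*k)
          = ((2:ℝ)^(2*k+4) - 2) / 2^(2*k+3) * (2*(k:ℝ)+1) * (2*(k:ℝ)+2)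
            * zetaR (2*(k:ℝ)+4) * (x^2)^k := by rw [hxp]
        _ ≤ ((2*(2*(k:ℝ)+1)*(2*(k:ℝ)+2))*2) * (x^2)^k := mul_le_mul_of_nonneg_right s2 hpk
        _ ≤ (16*((k:ℝ)+1)^2) * (x^2)^k := mul_le_mul_of_nonneg_right s3 hpk
        _ = 16*(((k:ℝ)+1)^2*(x^2)^k) := by ring
    · exact (maj_summable hxabs).mul_left 16
  -- summability of the beta series
  have hβs : Summable (fun k : ℕ => 2 * (2*(k:ℝ)+2) * (2*(k:ℝ)+3)
      * zetaR (2*(k:ℝ)+5) * x^(2*k+1)) := by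
    apply Summable.of_nonneg_of_le (f := fun k : ℕ => 36*(((k:ℝ)+1)^2*(x^2)^k))
    · intro k
      have h2 := hznn5 k
      have hb : (0:ℝ) ≤ 2*(k:ℝ)+2 := by positivity
      have hc : (0:ℝ) ≤ 2*(k:ℝ)+3 := by positivity
      have hp : (0:ℝ) ≤ x^(2*k+1) := by positivity
      exact mul_nonneg (mul_nonneg (mul_nonneg (mul_nonneg (by norm_num) hb) hc) h2) hp
    · intro k
      have hZ := hzle5 k
      have hZ0 := hznn5 k
      have hb : (0:ℝ) ≤ 2*(k:ℝ)+2 := by positivity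
      have hc : (0:ℝ) ≤ 2*(k:ℝ)+3 := by positivity
      have hxp : x^(2*k+1) = (x^2)^k * x := by rw [pow_succ, pow_mul]
      have hpk : (0:ℝ) ≤ (x^2)^k := by positivity
      have hxle : x^(2*k+1) ≤ (x^2)^k := by
        rw [hxp]
        calc (x^2)^k * x ≤ (x^2)^k * 1 :=
              mul_le_mul_of_nonneg_left (by linarith) hpk
          _ = (x^2)^k := mul_one _
      have s2 : 2 * (2*(k:ℝ)+2) * (2*(k:ℝ)+3) * zetaR (2*(k:ℝ)+5)
          ≤ (2*(2*(k:ℝ)+2)*(2*(k:ℝ)+3))*2 :=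
        mul_le_mul_of_nonneg_left hZ (by positivity)
      have s3 : (2*(2*(k:ℝ)+2)*(2*(k:ℝ)+3))*2 ≤ 36*((k:ℝ)+1)^2 := by
        nlinarith [Nat.cast_nonneg (α := ℝ) k]
      calc 2 * (2*(k:ℝ)+2) * (2*(k:ℝ)+3) * zetaR (2*(k:ℝ)+5) * x^(2*k+1)
          ≤ ((2*(2*(k:ℝ)+2)*(2*(k:ℝ)+3))*2) * (x^2)^k := by
            apply mul_le_mul s2 hxle (by positivity) (by positivity)
        _ ≤ (36*((k:ℝ)+1)^2) * (x^2)^k := mul_le_mul_of_nonneg_right s3 hpk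
        _ = 36*(((k:ℝ)+1)^2*(x^2)^k) := by ring
    · exact (maj_summable hxabs).mul_left 36
  -- double-sum summability
  have hfnn : ∀ k n : ℕ, 0 ≤ ((2:ℝ)^(2*k+4) - 2) / 2^(2*k+3) * (2*(k:ℝ)+1)
      * (2*(k:ℝ)+2) * (1/((n:ℝ)+1)^(2*k+4)) * x^(2*k) := by
    intro k n
    have h1 := (hcd k).1
    have hz : (0:ℝ) ≤ 1/((n:ℝ)+1)^(2*k+4) := by positivity
    have ha : (0:ℝ) ≤ 2*(k:ℝ)+1 := by positivity
    have hb : (0:ℝ) ≤ 2*(k:ℝ)+2 := by positivity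
    have hp : (0:ℝ) ≤ x^(2*k) := by positivity
    exact mul_nonneg (mul_nonneg (mul_nonneg (mul_nonneg h1 ha) hb) hz) hp
  have hgnn : ∀ k n : ℕ, 0 ≤ 2 * (2*(k:ℝ)+2) * (2*(k:ℝ)+3)
      * (1/((n:ℝ)+1)^(2*k+5)) * x^(2*k+1) := by
    intro k n
    have hz : (0:ℝ) ≤ 1/((n:ℝ)+1)^(2*k+5) := by positivity
    have hb : (0:ℝ) ≤ 2*(k:ℝ)+2 := by positivity
    have hc : (0:ℝ) ≤ 2*(k:ℝ)+3 := by positivity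
    have hp : (0:ℝ) ≤ x^(2*k+1) := by positivity
    exact mul_nonneg (mul_nonneg (mul_nonneg (mul_nonneg (by norm_num) hb) hc) hz) hp
  have hfprod : Summable (Function.uncurry (fun k n : ℕ =>
      ((2:ℝ)^(2*k+4) - 2) / 2^(2*k+3) * (2*(k:ℝ)+1) * (2*(k:ℝ)+2)
        * (1/((n:ℝ)+1)^(2*k+4)) * x^(2*k))) := by
    exact (summable_prod_of_nonneg (f := Function.uncurry (fun k n : ℕ =>
        ((2:ℝ)^(2*k+4) - 2) / 2^(2*k+3) * (2*(k:ℝ)+1) * (2*(k:ℝ)+2)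
          * (1/((n:ℝ)+1)^(2*k+4)) * x^(2*k))) (fun p => hfnn p.1 p.2)).mpr
      ⟨fun k => (hfk k).summable, hαs.congr fun k => ((hfk k).tsum_eq).symm⟩
  have hgprod : Summable (Function.uncurry (fun k n : ℕ =>
      2 * (2*(k:ℝ)+2) * (2*(k:ℝ)+3) * (1/((n:ℝ)+1)^(2*k+5)) * x^(2*k+1))) := by
    exact (summable_prod_of_nonneg (f := Function.uncurry (fun k n : ℕ =>
        2 * (2*(k:ℝ)+2) * (2*(k:ℝ)+3) * (1/((n:ℝ)+1)^(2*k+5)) * x^(2*k+1)))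
        (fun p => hgnn p.1 p.2)).mpr
      ⟨fun k => (hgk k).summable, hβs.congr fun k => ((hgk k).tsum_eq).symm⟩
  -- swap sums
  have hAeq : (∑' k : ℕ, ((2 : ℝ)^(2*k+4) - 2) / 2^(2*k+3) * (2*(k : ℝ)+1) * (2*(k : ℝ)+2) *
          zetaR (2*(k : ℝ)+4) * x^(2*k))
      = ∑' n : ℕ, (2/((n:ℝ)+1)^4 * (1/(1-x/((n:ℝ)+1))^3 + 1/(1+x/((n:ℝ)+1))^3)
        - 1/(4*((n:ℝ)+1)^4) * (1/(1-x/(2*((n:ℝ)+1)))^3 + 1/(1+x/(2*((n:ℝ)+1)))^3)) := by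
    calc (∑' k : ℕ, ((2 : ℝ)^(2*k+4) - 2) / 2^(2*k+3) * (2*(k : ℝ)+1) * (2*(k : ℝ)+2) *
          zetaR (2*(k : ℝ)+4) * x^(2*k))
        = ∑' k : ℕ, ∑' n : ℕ, ((2:ℝ)^(2*k+4) - 2) / 2^(2*k+3) * (2*(k:ℝ)+1) * (2*(k:ℝ)+2)
            * (1/((n:ℝ)+1)^(2*k+4)) * x^(2*k) := tsum_congr fun k => ((hfk k).tsum_eq).symm
      _ = ∑' n : ℕ, ∑' k : ℕ, ((2:ℝ)^(2*k+4) - 2) / 2^(2*k+3) * (2*(k:ℝ)+1) * (2*(k:ℝ)+2)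
            * (1/((n:ℝ)+1)^(2*k+4)) * x^(2*k) := (Summable.tsum_comm hfprod).symm
      _ = _ := tsum_congr fun n => (hsA x ((n:ℝ)+1) hx0 hx2' (hN n)).tsum_eq
  have hBeq : (∑' k : ℕ, 2 * (2*(k : ℝ)+2) * (2*(k : ℝ)+3) * zetaR (2*(k : ℝ)+5) * x^(2*k+1))
      = ∑' n : ℕ, (2/((n:ℝ)+1)^4 * (1/(1-x/((n:ℝ)+1))^3 - 1/(1+x/((n:ℝ)+1))^3)) := by
    calc (∑' k : ℕ, 2 * (2*(k : ℝ)+2) * (2*(k : ℝ)+3) * zetaR (2*(k : ℝ)+5) * x^(2*k+1))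
        = ∑' k : ℕ, ∑' n : ℕ, 2 * (2*(k:ℝ)+2) * (2*(k:ℝ)+3)
            * (1/((n:ℝ)+1)^(2*k+5)) * x^(2*k+1) := tsum_congr fun k => ((hgk k).tsum_eq).symm
      _ = ∑' n : ℕ, ∑' k : ℕ, 2 * (2*(k:ℝ)+2) * (2*(k:ℝ)+3)
            * (1/((n:ℝ)+1)^(2*k+5)) * x^(2*k+1) := (Summable.tsum_comm hgprod).symm
      _ = _ := tsum_congr fun n => (hsB x ((n:ℝ)+1) hx0 hx2' (hN n)).tsum_eq
  have hFs : Summable (fun n : ℕ => 2/((n:ℝ)+1)^4 * (1/(1-x/((n:ℝ)+1))^3 + 1/(1+x/((n:ℝ)+1))^3)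
      - 1/(4*((n:ℝ)+1)^4) * (1/(1-x/(2*((n:ℝ)+1)))^3 + 1/(1+x/(2*((n:ℝ)+1)))^3)) :=
    hfprod.prod_symm.prod.congr fun n => (hsA x ((n:ℝ)+1) hx0 hx2' (hN n)).tsum_eq
  have hGs : Summable (fun n : ℕ =>
      2/((n:ℝ)+1)^4 * (1/(1-x/((n:ℝ)+1))^3 - 1/(1+x/((n:ℝ)+1))^3)) :=
    hgprod.prod_symm.prod.congr fun n => (hsB x ((n:ℝ)+1) hx0 hx2' (hN n)).tsum_eq
  rw [hAeq, hBeq, ← Summable.tsum_sub hFs hGs]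
  exact Summable.tsum_pos (hFs.sub hGs) (fun n => (Fpos x ((n:ℝ)+1) hx0 hx2' (hN n)).le) 0
    (Fpos x (((0:ℕ):ℝ)+1) hx0 hx2' (hN 0))
end
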